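/- Let X be a topological space equipped with cell data (P, ε, σ ↦ U_σ) satisfying (P1) and (P2), let F be a sheaf of abelian groups on X, and let I_F be its Godement sheaf. Then for every i ≥ 0 there is an isomorphism of abelian groups Ȟ^i_P(I_F) ≅ ∏_{x∈X} H^i(K•(P_x, F_x)), induced by the isomorphism of complexes Č•_P(I_F) ≅ ∏_{x∈X} K•(P_x, F_x) that rearranges the products ∏_{|σ|=i} ∏_{x∈U_σ} F_x ≅ ∏_{x∈X} ∏_{σ∈P_x, |σ|=i} F_x. (This is equation (3.8.1) established in the proof of Lemma 3.7 of the paper.) -/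

import Mathlib

open CategoryTheory TopologicalSpace Opposite Function

universe u

/-- Cell data on a topological space `X`: a type of cells with a partial order and
dimension function, an incidence function satisfying the axioms of an incidence function
on a cell complex, and an order-reversing assignment of open sets covering `X`
(conditions (P1) and (P2)). -/
structure CellData (X : Type u) [TopologicalSpace X] : Type (u + 1) where
  /-- the type of cells -/
  P : Type u
  /-- the partial order on cells -/
  [po : PartialOrder P]
  /-- the dimension of each cell -/
  dim : P → ℕ
  /-- the incidence function -/
  eps : P → P → ℤ
  /-- axiom (i): for fixed `σ'` only finitely many `σ` have `eps σ σ' ≠ 0` -/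
  eps_finite : ∀ σ' : P, {σ : P | eps σ σ' ≠ 0}.Finite
  /-- axiom (ii): `eps σ σ' = 0` unless `σ < σ'` and `dim σ' = dim σ + 1` -/
  eps_eq_zero : ∀ σ σ' : P, ¬(σ < σ' ∧ dim σ' = dim σ + 1) → eps σ σ' = 0
  /-- axiom (iii) -/
  eps_comp : ∀ σ σ'' : P, dim σ'' = dim σ + 2 →
    (∑ᶠ σ' : P, eps σ σ' * eps σ' σ'') = 0
  /-- the open set attached to each cell -/
  U : P → Opens X
  /-- condition (P1): the assignment is order reversing -/
  mono : ∀ {σ σ' : P}, σ ≤ σ' → U σ' ≤ U σ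
  /-- condition (P2): the open sets cover `X` -/
  covers : ∀ x : X, ∃ σ : P, x ∈ U σ

attribute [instance] CellData.po

namespace CellData

variable {X : TopCat.{u}} (D : CellData ↥X)

/-- The cells of dimension `i`. -/
abbrev Cells (i : ℕ) : Type u := {σ : D.P // D.dim σ = i}

variable (F : TopCat.Presheaf Ab.{u} X)

/-- The `i`-th term of the reduced Čech complex of the presheaf `F`:
the product of the sections of `F` over the `U σ` for `σ` of dimension `i`. -/
abbrev cochain (i : ℕ) : Type u := ∀ σ : D.Cells i, ↥(F.obj (op (D.U σ.1)))

open scoped Classical in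
/-- For a pair of cells, `eps σ σ'` times the restriction map from `U σ` to `U σ'`
(interpreted as `0` unless `σ ≤ σ'`). -/
noncomputable def pairMap (σ σ' : D.P) :
    ↥(F.obj (op (D.U σ))) →+ ↥(F.obj (op (D.U σ'))) :=
  D.eps σ σ' • (if h : σ ≤ σ' then ((F.map (homOfLE (D.mono h)).op).hom : _ →+ _) else 0)

lemma support_pairMap_finite {i : ℕ} (σ' : D.Cells (i + 1)) (f : D.cochain F i) :
    (Function.support fun σ : D.Cells i => D.pairMap F σ.1 σ'.1 (f σ)).Finite := by
  apply Set.Finite.subset ((D.eps_finite σ'.1).preimage (Set.injOn_of_injective Subtype.val_injective))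
  intro σ hσ
  simp only [Function.mem_support] at hσ
  simp only [Set.mem_preimage, Set.mem_setOf_eq]
  intro hz
  apply hσ
  simp [pairMap, hz]

/-- The differential of the reduced Čech complex. -/
noncomputable def cechDiff (i : ℕ) : D.cochain F i →+ D.cochain F (i + 1) :=
  AddMonoidHom.mk'
    (fun f σ' => ∑ᶠ σ : D.Cells i, D.pairMap F σ.1 σ'.1 (f σ))
    (by
      intro f g
      funext σ'
      have : ∀ σ : D.Cells i, D.pairMap F σ.1 σ'.1 ((f + g) σ)
          = D.pairMap F σ.1 σ'.1 (f σ) + D.pairMap F σ.1 σ'.1 (g σ) := by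
        intro σ
        rw [Pi.add_apply, map_add]
      show (∑ᶠ σ : D.Cells i, D.pairMap F σ.1 σ'.1 ((f + g) σ)) = _
      rw [finsum_congr this,
        finsum_add_distrib (D.support_pairMap_finite F σ' f) (D.support_pairMap_finite F σ' g)]
      rfl)

/-- The cocycles of the reduced Čech complex. -/
noncomputable def cechCocycles (i : ℕ) : AddSubgroup (D.cochain F i) :=
  (D.cechDiff F i).ker

/-- The coboundaries of the reduced Čech complex. -/
noncomputable def cechCoboundaries : (i : ℕ) → AddSubgroup (D.cochain F i)
  | 0 => ⊥
  | (j + 1) => (D.cechDiff F j).range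

/-- The `i`-th reduced Čech cohomology group `Ȟ^i_P(F)`. -/
noncomputable def reducedCechCohomology (i : ℕ) : Type u :=
  ↥(D.cechCocycles F i) ⧸
    ((D.cechCoboundaries F i).addSubgroupOf (D.cechCocycles F i))

noncomputable instance (i : ℕ) : AddCommGroup (D.reducedCechCohomology F i) :=
  QuotientAddGroup.Quotient.addCommGroup _

end CellData

namespace CellData

variable {X : TopCat.{u}} (D : CellData ↥X)

/-- For `x : X`, the cells `σ` of dimension `i` with `x ∈ U σ` (the `i`-cells of `P ₓ`). -/
abbrev KCells (x : ↥X) (i : ℕ) : Type u := {σ : D.P // x ∈ D.U σ ∧ D.dim σ = i}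

/-- The `i`-th term of the complex `K^•(Pₓ, A)`. -/
abbrev KCochain (x : ↥X) (A : Type u) [AddCommGroup A] (i : ℕ) : Type u :=
  D.KCells x i → A

/-- The differential of the complex `K^•(Pₓ, A)`. -/
noncomputable def KDiffFun (x : ↥X) (A : Type u) [AddCommGroup A] (i : ℕ)
    (f : D.KCochain x A i) : D.KCochain x A (i + 1) :=
  fun σ' => ∑ᶠ σ : D.KCells x i, D.eps σ.1 σ'.1 • f σ

/-- Condition (P3'): for every point `x` and every abelian group `A`, the map sending
`a : A` to the constant family in `K⁰(Pₓ, A)` is injective with image exactly the kernel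
of the differential `K⁰(Pₓ, A) → K¹(Pₓ, A)`. -/
def CondP3 : Prop :=
  ∀ (x : ↥X) (A : Type u) [AddCommGroup A],
    Function.Injective (fun (a : A) (_ : D.KCells x 0) => a) ∧
      Set.range (fun (a : A) (_ : D.KCells x 0) => a) =
        {f : D.KCochain x A 0 | D.KDiffFun x A 0 f = 0}

/-- Condition (P4'): for every point `x`, every abelian group `A` and every `i ≥ 1`, the
cohomology of the complex `K^•(Pₓ, A)` in degree `i` vanishes; i.e., every cocycle in
degree `i = j + 1` is a coboundary. -/
def CondP4 : Prop :=
  ∀ (x : ↥X) (A : Type u) [AddCommGroup A] (j : ℕ)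
    (f : D.KCochain x A (j + 1)), D.KDiffFun x A (j + 1) f = 0 →
      ∃ g : D.KCochain x A j, D.KDiffFun x A j g = f

end CellData


namespace CellData

variable {X : TopCat.{u}} (D : CellData ↥X)

lemma support_KDiff_finite (x : ↥X) (A : Type u) [AddCommGroup A] {i : ℕ}
    (σ' : D.KCells x (i + 1)) (f : D.KCochain x A i) :
    (Function.support fun σ : D.KCells x i => D.eps σ.1 σ'.1 • f σ).Finite := by
  apply Set.Finite.subset ((D.eps_finite σ'.1).preimage
    (Set.injOn_of_injective Subtype.val_injective))
  intro σ hσ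
  simp only [Function.mem_support] at hσ
  simp only [Set.mem_preimage, Set.mem_setOf_eq]
  intro hz
  apply hσ
  rw [hz, zero_smul]

/-- The differential of the complex `K^•(Pₓ, A)`, as a homomorphism. -/
noncomputable def KDiff (x : ↥X) (A : Type u) [AddCommGroup A] (i : ℕ) :
    D.KCochain x A i →+ D.KCochain x A (i + 1) :=
  AddMonoidHom.mk' (fun f => D.KDiffFun x A i f)
    (by
      intro f g
      funext σ'
      show (∑ᶠ σ : D.KCells x i, D.eps σ.1 σ'.1 • (f + g) σ) = _
      have : ∀ σ : D.KCells x i, D.eps σ.1 σ'.1 • (f + g) σ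
          = D.eps σ.1 σ'.1 • f σ + D.eps σ.1 σ'.1 • g σ := by
        intro σ
        rw [Pi.add_apply, smul_add]
      rw [finsum_congr this,
        finsum_add_distrib (D.support_KDiff_finite x A σ' f)
          (D.support_KDiff_finite x A σ' g)]
      rfl)

/-- The cocycles of the complex `K^•(Pₓ, A)`. -/
noncomputable def KCocycles (x : ↥X) (A : Type u) [AddCommGroup A] (i : ℕ) :
    AddSubgroup (D.KCochain x A i) :=
  (D.KDiff x A i).ker

/-- The coboundaries of the complex `K^•(Pₓ, A)`. -/
noncomputable def KCoboundaries (x : ↥X) (A : Type u) [AddCommGroup A] :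
    (i : ℕ) → AddSubgroup (D.KCochain x A i)
  | 0 => ⊥
  | (j + 1) => (D.KDiff x A j).range

/-- The `i`-th cohomology group of the complex `K^•(Pₓ, A)`. -/
noncomputable def KCohomology (x : ↥X) (A : Type u) [AddCommGroup A] (i : ℕ) : Type u :=
  ↥(D.KCocycles x A i) ⧸ ((D.KCoboundaries x A i).addSubgroupOf (D.KCocycles x A i))

noncomputable instance (x : ↥X) (A : Type u) [AddCommGroup A] (i : ℕ) :
    AddCommGroup (D.KCohomology x A i) :=
  QuotientAddGroup.Quotient.addCommGroup _

end CellData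

section Stmt9Aux

open CellData

variable {X : TopCat.{u}} (D : CellData ↥X) (F I : TopCat.Sheaf Ab.{u} X)
  (e : ∀ U : Opens ↥X,
      ↥(I.val.obj (op U)) ≃+ ∀ x : ↥U, ↥(TopCat.Presheaf.stalk F.val x.1))

/-- The rearrangement isomorphism in degree `i`. -/
noncomputable def etaEquiv (i : ℕ) :
    D.cochain I.val i ≃+
      (∀ x : ↥X, D.KCochain x ↥(TopCat.Presheaf.stalk F.val x) i) where
  toFun f x σ := e (D.U σ.1) (f ⟨σ.1, σ.2.2⟩) ⟨x, σ.2.1⟩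
  invFun g σ := (e (D.U σ.1)).symm (fun y => g y.1 ⟨σ.1, y.2, σ.2⟩)
  left_inv f := by
    funext σ
    exact (e (D.U σ.1)).symm_apply_apply (f σ)
  right_inv g := by
    funext x σ
    exact congrFun ((e (D.U σ.1)).apply_symm_apply
      (fun y => g y.1 ⟨σ.1, y.2, σ.2.2⟩)) ⟨x, σ.2.1⟩
  map_add' f g := by
    funext x σ
    simp [map_add]

variable (he : ∀ (V U : Opens ↥X) (h : V ≤ U) (s : ↥(I.val.obj (op U))) (x : ↥V),
      e V (I.val.map (homOfLE h).op s) x = e U s ⟨x.1, h x.2⟩)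

include he in
lemma etaEquiv_comm (i : ℕ) (f : D.cochain I.val i) (x : ↥X) :
    etaEquiv D F I e (i + 1) (D.cechDiff I.val i f) x =
      D.KDiffFun x ↥(TopCat.Presheaf.stalk F.val x) i (etaEquiv D F I e i f x) := by
  funext σ'
  set σ'c : D.Cells (i + 1) := ⟨σ'.1, σ'.2.2⟩ with hσ'c
  have hx' : x ∈ D.U σ'.1 := σ'.2.1
  -- the evaluation homomorphism
  set φ : ↥(I.val.obj (op (D.U σ'.1))) →+ ↥(TopCat.Presheaf.stalk F.val x) :=
    (Pi.evalAddMonoidHom (fun y : ↥(D.U σ'.1) => ↥(TopCat.Presheaf.stalk F.val y.1))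
      ⟨x, hx'⟩).comp (e (D.U σ'.1)).toAddMonoidHom with hφ
  have hL : etaEquiv D F I e (i + 1) (D.cechDiff I.val i f) x σ' =
      φ (∑ᶠ σ : D.Cells i, D.pairMap I.val σ.1 σ'.1 (f σ)) := rfl
  rw [hL, AddMonoidHom.map_finsum φ (D.support_pairMap_finite I.val σ'c f)]
  -- the inclusion of `KCells x i` into `Cells i`
  set ι : D.KCells x i → D.Cells i := fun τ => ⟨τ.1, τ.2.2⟩ with hι
  have hinj : Function.Injective ι := by
    intro a b hab
    have : a.1 = b.1 := congrArg (Subtype.val : D.Cells i → D.P) hab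
    exact Subtype.ext this
  set t : D.Cells i → ↥(TopCat.Presheaf.stalk F.val x) :=
    fun σ => φ (D.pairMap I.val σ.1 σ'.1 (f σ)) with ht
  have hsupp : Function.support t ⊆ Set.range ι := by
    intro σ hσ
    have heps : D.eps σ.1 σ'.1 ≠ 0 := by
      intro h0
      apply hσ
      have : D.pairMap I.val σ.1 σ'.1 = 0 := by
        rw [pairMap, h0, zero_smul]
      simp [ht, this]
    have hlt : σ.1 < σ'.1 ∧ D.dim σ'.1 = D.dim σ.1 + 1 := by
      by_contra hc
      exact heps (D.eps_eq_zero σ.1 σ'.1 hc)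
    have hxσ : x ∈ D.U σ.1 := D.mono hlt.1.le hx'
    exact ⟨⟨σ.1, hxσ, σ.2⟩, rfl⟩
  have hre : (∑ᶠ σ : D.Cells i, t σ) = ∑ᶠ τ : D.KCells x i, t (ι τ) := by
    rw [← finsum_mem_univ t, finsum_mem_inter_support_eq t _ (Set.range ι)
      (by rw [Set.univ_inter, Set.inter_eq_right.mpr hsupp]),
      finsum_mem_range hinj]
  have hterm : ∀ τ : D.KCells x i, t (ι τ) =
      D.eps τ.1 σ'.1 • etaEquiv D F I e i f x τ := by
    intro τ
    by_cases h0 : D.eps τ.1 σ'.1 = 0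
    · have : D.pairMap I.val τ.1 σ'.1 = 0 := by
        rw [pairMap, h0, zero_smul]
      show φ (D.pairMap I.val τ.1 σ'.1 (f (ι τ))) = D.eps τ.1 σ'.1 • etaEquiv D F I e i f x τ
      simp [this, h0]
    · have hlt : τ.1 < σ'.1 ∧ D.dim σ'.1 = D.dim τ.1 + 1 := by
        by_contra hc
        exact h0 (D.eps_eq_zero τ.1 σ'.1 hc)
      have hle : τ.1 ≤ σ'.1 := hlt.1.le
      have hpm : D.pairMap I.val τ.1 σ'.1 (f (ι τ)) =
          D.eps τ.1 σ'.1 • (I.val.map (homOfLE (D.mono hle)).op (f (ι τ))) := by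
        rw [pairMap, dif_pos hle]
        rfl
      have : t (ι τ) = D.eps τ.1 σ'.1 •
          φ (I.val.map (homOfLE (D.mono hle)).op (f (ι τ))) := by
        rw [ht]
        simp only
        rw [hpm, map_zsmul]
      rw [this]
      congr 1
      have := he (D.U σ'.1) (D.U τ.1) (D.mono hle) (f (ι τ)) ⟨x, hx'⟩
      exact this
  calc (∑ᶠ σ : D.Cells i, t σ) = ∑ᶠ τ : D.KCells x i, t (ι τ) := hre
    _ = ∑ᶠ τ : D.KCells x i, D.eps τ.1 σ'.1 • etaEquiv D F I e i f x τ :=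
        finsum_congr hterm
    _ = _ := rfl

include he in
lemma etaEquiv_cocycle_iff (i : ℕ) (f : D.cochain I.val i) :
    f ∈ D.cechCocycles I.val i ↔
      ∀ x : ↥X, etaEquiv D F I e i f x ∈
        D.KCocycles x ↥(TopCat.Presheaf.stalk F.val x) i := by
  constructor
  · intro hf x
    show D.KDiffFun x _ i (etaEquiv D F I e i f x) = 0
    rw [← etaEquiv_comm D F I e he i f x]
    have : D.cechDiff I.val i f = 0 := hf
    rw [this, map_zero]
    rfl
  · intro hf
    show D.cechDiff I.val i f = 0
    apply (etaEquiv D F I e (i + 1)).injective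
    rw [map_zero]
    funext x
    rw [etaEquiv_comm D F I e he i f x]
    exact hf x

end Stmt9Aux

/-- equation (3.8.1): let `X` carry cell data satisfying (P1) and (P2), let
`F` be a sheaf of abelian groups on `X` and let `I` be its Godement sheaf (a sheaf whose
sections over each open `U` are identified with `∏_{x ∈ U} Fₓ`, compatibly with
restriction).  Then there is an isomorphism of cochain complexes
`Č^•_P(I) ≅ ∏_{x ∈ X} K^•(Pₓ, Fₓ)` (rearranging the products), and hence for every
`i ≥ 0` an isomorphism of abelian groups `Ȟ^i_P(I) ≅ ∏_{x ∈ X} H^i(K^•(Pₓ, Fₓ))`. -/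
theorem stmt9 (X : TopCat.{u}) (D : CellData ↥X)
    (F : TopCat.Sheaf Ab.{u} X)
    (I : TopCat.Sheaf Ab.{u} X)
    (e : ∀ U : Opens ↥X,
      ↥(I.val.obj (op U)) ≃+ ∀ x : ↥U, ↥(TopCat.Presheaf.stalk F.val x.1))
    (he : ∀ (V U : Opens ↥X) (h : V ≤ U) (s : ↥(I.val.obj (op U))) (x : ↥V),
      e V (I.val.map (homOfLE h).op s) x = e U s ⟨x.1, h x.2⟩) :
    (∃ η : ∀ i : ℕ, D.cochain I.val i ≃+
        (∀ x : ↥X, D.KCochain x ↥(TopCat.Presheaf.stalk F.val x) i),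
      ∀ (i : ℕ) (f : D.cochain I.val i) (x : ↥X),
        η (i + 1) (D.cechDiff I.val i f) x =
          D.KDiffFun x ↥(TopCat.Presheaf.stalk F.val x) i (η i f x)) ∧
    ∀ i : ℕ, Nonempty (D.reducedCechCohomology I.val i ≃+
      ∀ x : ↥X, D.KCohomology x ↥(TopCat.Presheaf.stalk F.val x) i) := by
  classical
  refine ⟨⟨fun i => etaEquiv D F I e i, fun i f x => etaEquiv_comm D F I e he i f x⟩, ?_⟩
  intro i
  let Φ : ↥(D.cechCocycles I.val i) →+
      (∀ x : ↥X, D.KCohomology x ↥(TopCat.Presheaf.stalk F.val x) i) :=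
    AddMonoidHom.mk' (fun f x =>
      QuotientAddGroup.mk' ((D.KCoboundaries x ↥(TopCat.Presheaf.stalk F.val x) i).addSubgroupOf
          (D.KCocycles x ↥(TopCat.Presheaf.stalk F.val x) i))
        ⟨etaEquiv D F I e i f.1 x,
          (etaEquiv_cocycle_iff D F I e he i f.1).mp f.2 x⟩)
      (by
        intro f g
        funext x
        refine Eq.trans ?_ (map_add (QuotientAddGroup.mk' _) _ _)
        congr 1
        exact Subtype.ext (by
          show etaEquiv D F I e i (f.1 + g.1) x = _
          rw [map_add]
          rfl))
  have hsurj : Function.Surjective Φ := by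
    intro c
    let z : ∀ x : ↥X, ↥(D.KCocycles x ↥(TopCat.Presheaf.stalk F.val x) i) :=
      fun x => (c x).out
    let g : ∀ x : ↥X, D.KCochain x ↥(TopCat.Presheaf.stalk F.val x) i :=
      fun x => (z x).1
    let f := (etaEquiv D F I e i).symm g
    have hfg : etaEquiv D F I e i f = g := (etaEquiv D F I e i).apply_symm_apply g
    have hf : f ∈ D.cechCocycles I.val i := by
      refine (etaEquiv_cocycle_iff D F I e he i f).mpr (fun x => ?_)
      show D.KDiff x ↥(TopCat.Presheaf.stalk F.val x) i (etaEquiv D F I e i f x) = 0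
      rw [hfg]
      exact (z x).2
    refine ⟨⟨f, hf⟩, ?_⟩
    funext x
    have h2 : ∀ (a : ↥(D.KCocycles x ↥(TopCat.Presheaf.stalk F.val x) i)),
        a = (c x).out → QuotientAddGroup.mk'
          ((D.KCoboundaries x ↥(TopCat.Presheaf.stalk F.val x) i).addSubgroupOf
            (D.KCocycles x ↥(TopCat.Presheaf.stalk F.val x) i)) a = c x := by
      rintro a rfl
      exact QuotientAddGroup.out_eq' (c x)
    exact h2 _ (Subtype.ext (congrFun hfg x))
  have hker : Φ.ker =
      (D.cechCoboundaries I.val i).addSubgroupOf (D.cechCocycles I.val i) := by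
    ext f
    rw [AddMonoidHom.mem_ker, AddSubgroup.mem_addSubgroupOf]
    have hpt : Φ f = 0 ↔ ∀ x : ↥X, etaEquiv D F I e i f.1 x ∈
        D.KCoboundaries x ↥(TopCat.Presheaf.stalk F.val x) i := by
      constructor
      · intro hf x
        exact AddSubgroup.mem_addSubgroupOf.mp
          ((QuotientAddGroup.eq_zero_iff _).mp (congrFun hf x))
      · intro hf
        funext x
        exact (QuotientAddGroup.eq_zero_iff _).mpr
          (AddSubgroup.mem_addSubgroupOf.mpr (hf x))
    rw [hpt]
    cases i with
    | zero =>
      constructor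
      · intro hf
        show f.1 ∈ (⊥ : AddSubgroup (D.cochain I.val 0))
        rw [AddSubgroup.mem_bot]
        apply (etaEquiv D F I e 0).injective
        rw [map_zero]
        funext x
        have := hf x
        rw [show D.KCoboundaries x ↥(TopCat.Presheaf.stalk F.val x) 0 =
          ⊥ from rfl, AddSubgroup.mem_bot] at this
        exact this
      · intro hf x
        have hf0 : f.1 = 0 := AddSubgroup.mem_bot.mp hf
        rw [show D.KCoboundaries x ↥(TopCat.Presheaf.stalk F.val x) 0 =
          ⊥ from rfl, AddSubgroup.mem_bot, hf0, map_zero]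
        rfl
    | succ j =>
      constructor
      · intro hf
        have hf' : ∀ x : ↥X, ∃ g, D.KDiff x ↥(TopCat.Presheaf.stalk F.val x) j g =
            etaEquiv D F I e (j + 1) f.1 x := fun x =>
          AddMonoidHom.mem_range.mp (hf x)
        choose g hg using hf'
        refine AddMonoidHom.mem_range.mpr ⟨(etaEquiv D F I e j).symm g, ?_⟩
        apply (etaEquiv D F I e (j + 1)).injective
        funext x
        rw [etaEquiv_comm D F I e he j _ x]
        have : etaEquiv D F I e j ((etaEquiv D F I e j).symm g) = g :=
          (etaEquiv D F I e j).apply_symm_apply g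
        rw [this]
        exact hg x
      · intro hf x
        obtain ⟨h, hh⟩ := AddMonoidHom.mem_range.mp hf
        refine AddMonoidHom.mem_range.mpr ⟨etaEquiv D F I e j h x, ?_⟩
        show D.KDiffFun x ↥(TopCat.Presheaf.stalk F.val x) j (etaEquiv D F I e j h x) = _
        rw [← etaEquiv_comm D F I e he j h x, hh]
  exact ⟨(QuotientAddGroup.quotientAddEquivOfEq hker.symm).trans
    (QuotientAddGroup.quotientKerEquivOfSurjective Φ hsurj)⟩
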